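/- Let 1 ≤ m ≤ n and let μ_1, μ_2 be two Miura-locally-valid MV assignments of the m×n Miura-ori. Then μ_1 can be transformed into μ_2 by a sequence of at most 2mn² single face flips in which every intermediate MV assignment is Miura-locally-valid. -/

import Mathlib

/-- A crease edge of the `m × n` square grid crease pattern: a vertical crease
`V i j` between faces `(i,j)` and `(i+1,j)`, or a horizontal crease `H i j`
between faces `(i,j)` and `(i,j+1)`. -/
inductive Crease (m n : ℕ) : Type where
  | V : (i j : ℕ) → i + 1 < m → j < n → Crease m n
  | H : (i j : ℕ) → i < m → j + 1 < n → Crease m n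

/-- The face `F` borders the crease `e`. -/
def Borders {m n : ℕ} (F : ℕ × ℕ) : Crease m n → Prop
  | .V i j _ _ => F = (i, j) ∨ F = (i + 1, j)
  | .H i j _ _ => F = (i, j) ∨ F = (i, j + 1)

instance {m n : ℕ} (F : ℕ × ℕ) (e : Crease m n) : Decidable (Borders F e) :=
  match e with
  | .V i j _ _ => inferInstanceAs (Decidable (F = (i, j) ∨ F = (i + 1, j)))
  | .H i j _ _ => inferInstanceAs (Decidable (F = (i, j) ∨ F = (i, j + 1)))

/-- A mountain-valley assignment takes values in `{-1, 1}`. -/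
def IsMV {m n : ℕ} (μ : Crease m n → ℤ) : Prop :=
  ∀ e, μ e = 1 ∨ μ e = -1

/-- Local validity: at every interior vertex `(a+1, b+1)` the sum of `μ` over the four
incident crease edges is `2` or `-2`. -/
def LocallyValid {m n : ℕ} (μ : Crease m n → ℤ) : Prop :=
  ∀ a b : ℕ, ∀ ha : a + 1 < m, ∀ hb : b + 1 < n,
    μ (.V a b ha (by omega)) + μ (.V a (b + 1) ha hb) +
      μ (.H a b (by omega) hb) + μ (.H (a + 1) b ha hb) = 2 ∨
    μ (.V a b ha (by omega)) + μ (.V a (b + 1) ha hb) +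
      μ (.H a b (by omega) hb) + μ (.H (a + 1) b ha hb) = -2

/-- The face faceFlip of `μ` at the face `F`. -/
def faceFlip {m n : ℕ} (μ : Crease m n → ℤ) (F : ℕ × ℕ) (e : Crease m n) : ℤ :=
  if Borders F e then -μ e else μ e

/-- The faces of the `m × n` square grid. -/
def Faces (m n : ℕ) : Finset (ℕ × ℕ) := Finset.range m ×ˢ Finset.range n

/-- One of the two faces bordering a crease. -/
def faceA {m n : ℕ} : Crease m n → ℕ × ℕ
  | .V i j _ _ => (i, j)
  | .H i j _ _ => (i, j)

/-- The other face bordering a crease. -/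
def faceB {m n : ℕ} : Crease m n → ℕ × ℕ
  | .V i j _ _ => (i + 1, j)
  | .H i j _ _ => (i, j + 1)

/-- Miura local validity at every interior vertex `v = (a+1, b+1)`:
(a) the sum of `μ` over the four incident creases is `2` or `-2`, and
(b) the values of `μ` on `V (a,b)`, `V (a,b+1)` and the near horizontal crease
(`H (a,b)` if the row index `b+1` is even, `H (a+1,b)` if it is odd) are not all equal. -/
def MiuraLocallyValid {m n : ℕ} (μ : Crease m n → ℤ) : Prop :=
  ∀ a b : ℕ, ∀ ha : a + 1 < m, ∀ hb : b + 1 < n,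
    (μ (.V a b ha (by omega)) + μ (.V a (b + 1) ha hb) +
        μ (.H a b (by omega) hb) + μ (.H (a + 1) b ha hb) = 2 ∨
      μ (.V a b ha (by omega)) + μ (.V a (b + 1) ha hb) +
        μ (.H a b (by omega) hb) + μ (.H (a + 1) b ha hb) = -2) ∧
    ¬ (μ (.V a b ha (by omega)) = μ (.V a (b + 1) ha hb) ∧
        μ (.V a (b + 1) ha hb) =
          μ (if (b + 1) % 2 = 0 then Crease.H a b (by omega) hb
             else Crease.H (a + 1) b ha hb))

/-- `c` is the coloring of the faces by `ℤ/3ℤ` associated to the MV assignment `μ`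
of the Miura-ori: `c (0,0) = 0`; within row `j`, `c (i+1,j) = c (i,j) ± μ (V i j)`
with sign `+` for even `j` and `-` for odd `j`; and between rows,
`c (m-1, j+1) = c (m-1, j) + μ (H (m-1) j)` for even `j` and
`c (0, j+1) = c (0, j) + μ (H 0 j)` for odd `j`. -/
def IsAssocColoring (m n : ℕ) (hm : 1 ≤ m) (μ : Crease m n → ℤ)
    (c : ℕ × ℕ → ZMod 3) : Prop :=
  c (0, 0) = 0 ∧
  (∀ i j : ℕ, ∀ hi : i + 1 < m, ∀ hj : j < n,
    c (i + 1, j) = c (i, j) +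
      (if j % 2 = 0 then ((μ (.V i j hi hj) : ℤ) : ZMod 3)
       else -((μ (.V i j hi hj) : ℤ) : ZMod 3))) ∧
  (∀ j : ℕ, ∀ hj : j + 1 < n, j % 2 = 0 →
    c (m - 1, j + 1) = c (m - 1, j) + ((μ (.H (m - 1) j (by omega) hj) : ℤ) : ZMod 3)) ∧
  (∀ j : ℕ, ∀ hj : j + 1 < n, j % 2 = 1 →
    c (0, j + 1) = c (0, j) + ((μ (.H 0 j (by omega) hj) : ℤ) : ZMod 3))

/-- Applying the face flips of a list of faces in succession, starting from `μ`. -/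
def flipSeq {m n : ℕ} (μ : Crease m n → ℤ) (L : List (ℕ × ℕ)) : Crease m n → ℤ :=
  L.foldl (fun ν F => faceFlip ν F) μ

namespace MiuraAux

/-- Sign `(-1)^j` as an integer. -/
def vsgn (j : ℕ) : ℤ := if j % 2 = 0 then 1 else -1

lemma vsgn_eq (j : ℕ) : vsgn j = 1 ∨ vsgn j = -1 := by
  unfold vsgn; split <;> simp

lemma vsgn_even {j : ℕ} (h : j % 2 = 0) : vsgn j = 1 := if_pos h

lemma vsgn_odd {j : ℕ} (h : j % 2 = 1) : vsgn j = -1 := if_neg (by omega)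

/-- The MV assignment associated to a height function. -/
def muOf (m n : ℕ) (h : ℕ × ℕ → ℤ) : Crease m n → ℤ
  | .V i j _ _ => vsgn j * (h (i + 1, j) - h (i, j))
  | .H i j _ _ => h (i, j + 1) - h (i, j)

/-- `h` is a height function: all steps on the grid are `±1`. -/
def Ht (m n : ℕ) (h : ℕ × ℕ → ℤ) : Prop :=
  (∀ i j, i + 1 < m → j < n →
    h (i + 1, j) - h (i, j) = 1 ∨ h (i + 1, j) - h (i, j) = -1) ∧
  (∀ i j, i < m → j + 1 < n →
    h (i, j + 1) - h (i, j) = 1 ∨ h (i, j + 1) - h (i, j) = -1)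

lemma mem_Faces {m n : ℕ} {p : ℕ × ℕ} : p ∈ Faces m n ↔ p.1 < m ∧ p.2 < n := by
  simp [Faces, Finset.mem_product]

lemma isMV_muOf (m n : ℕ) (h : ℕ × ℕ → ℤ) (hh : Ht m n h) : IsMV (muOf m n h) := by
  intro e
  cases e with
  | V i j hi hj =>
    have := hh.1 i j hi hj
    have := vsgn_eq j
    simp only [muOf]
    rcases this with h1 | h1 <;> rw [h1] <;> omega
  | H i j hi hj =>
    have := hh.2 i j hi hj
    simp only [muOf]
    omega

lemma miura_muOf (m n : ℕ) (h : ℕ × ℕ → ℤ) (hh : Ht m n h) :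
    MiuraLocallyValid (muOf m n h) := by
  intro a b ha hb
  have s1 := hh.1 a b ha (by omega)
  have s2 := hh.1 a (b + 1) ha hb
  have s3 := hh.2 a b (by omega) hb
  have s4 := hh.2 (a + 1) b ha hb
  rcases Nat.even_or_odd b with hbe | hbo
  · have h1 : b % 2 = 0 := Nat.even_iff.mp hbe
    rw [if_neg (by omega : ¬ (b + 1) % 2 = 0)]
    simp only [muOf]
    rw [vsgn_even h1, vsgn_odd (by omega : (b + 1) % 2 = 1)]
    constructor
    · omega
    · omega
  · have h1 : b % 2 = 1 := Nat.odd_iff.mp hbo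
    rw [if_pos (by omega : (b + 1) % 2 = 0)]
    simp only [muOf]
    rw [vsgn_odd h1, vsgn_even (by omega : (b + 1) % 2 = 0)]
    constructor
    · omega
    · omega

lemma muOf_congr (m n : ℕ) (h₁ h₂ : ℕ × ℕ → ℤ)
    (he : ∀ p ∈ Faces m n, h₁ p = h₂ p) : muOf m n h₁ = muOf m n h₂ := by
  funext e
  cases e with
  | V i j hi hj =>
    simp only [muOf]
    rw [he (i + 1, j) (mem_Faces.mpr ⟨by omega, hj⟩),
        he (i, j) (mem_Faces.mpr ⟨by omega, hj⟩)]
  | H i j hi hj =>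
    simp only [muOf]
    rw [he (i, j + 1) (mem_Faces.mpr ⟨hi, by omega⟩),
        he (i, j) (mem_Faces.mpr ⟨hi, by omega⟩)]

/-! ### Construction of the height function from a Miura-valid MV assignment -/

/-- signed vertical step -/
def vstep (m n : ℕ) (μ : Crease m n → ℤ) (i j : ℕ) : ℤ :=
  if h : i + 1 < m ∧ j < n then vsgn j * μ (.V i j h.1 h.2) else 0

/-- horizontal step -/
def hstep (m n : ℕ) (μ : Crease m n → ℤ) (i j : ℕ) : ℤ :=
  if h : i < m ∧ j + 1 < n then μ (.H i j h.1 h.2) else 0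

lemma vstep_eq (m n : ℕ) (μ : Crease m n → ℤ) (i j : ℕ) (h1 : i + 1 < m) (h2 : j < n) :
    vstep m n μ i j = vsgn j * μ (.V i j h1 h2) := by
  unfold vstep; rw [dif_pos ⟨h1, h2⟩]

lemma hstep_eq (m n : ℕ) (μ : Crease m n → ℤ) (i j : ℕ) (h1 : i < m) (h2 : j + 1 < n) :
    hstep m n μ i j = μ (.H i j h1 h2) := by
  unfold hstep; rw [dif_pos ⟨h1, h2⟩]

/-- partial column sums -/
def colAcc (m n : ℕ) (μ : Crease m n → ℤ) (j i : ℕ) : ℤ :=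
  ∑ k ∈ Finset.range i, vstep m n μ k j

/-- the height at the bottom of each column -/
def base (m n : ℕ) (μ : Crease m n → ℤ) : ℕ → ℤ
  | 0 => 0
  | j + 1 => base m n μ j +
      (if j % 2 = 0
        then colAcc m n μ j (m - 1) + hstep m n μ (m - 1) j - colAcc m n μ (j + 1) (m - 1)
        else hstep m n μ 0 j)

/-- the height function associated to `μ` -/
def hgt (m n : ℕ) (μ : Crease m n → ℤ) : ℕ × ℕ → ℤ :=
  fun p => base m n μ p.2 + colAcc m n μ p.2 p.1

lemma hgt_vert (m n : ℕ) (μ : Crease m n → ℤ) (i j : ℕ) :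
    hgt m n μ (i + 1, j) = hgt m n μ (i, j) + vstep m n μ i j := by
  simp only [hgt, colAcc, Finset.sum_range_succ]; ring

/-- The key linear relation at interior vertices, from Miura local validity. -/
lemma square_rel (m n : ℕ) (μ : Crease m n → ℤ) (hmv : IsMV μ)
    (hval : MiuraLocallyValid μ) (a b : ℕ) (ha : a + 1 < m) (hb : b + 1 < n) :
    vstep m n μ a b + hstep m n μ (a + 1) b = hstep m n μ a b + vstep m n μ a (b + 1) := by
  rw [vstep_eq m n μ a b ha (by omega), vstep_eq m n μ a (b + 1) ha hb,
      hstep_eq m n μ (a + 1) b ha hb, hstep_eq m n μ a b (by omega) hb]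
  have e1 := hmv (.V a b ha (by omega))
  have e2 := hmv (.V a (b + 1) ha hb)
  have e3 := hmv (.H a b (by omega) hb)
  have e4 := hmv (.H (a + 1) b ha hb)
  have hv := hval a b ha hb
  rcases Nat.even_or_odd b with hbe | hbo
  · have h1 : b % 2 = 0 := Nat.even_iff.mp hbe
    rw [if_neg (by omega : ¬ (b + 1) % 2 = 0)] at hv
    rw [vsgn_even h1, vsgn_odd (by omega : (b + 1) % 2 = 1)]
    omega
  · have h1 : b % 2 = 1 := Nat.odd_iff.mp hbo
    rw [if_pos (by omega : (b + 1) % 2 = 0)] at hv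
    rw [vsgn_odd h1, vsgn_even (by omega : (b + 1) % 2 = 0)]
    omega

/-- The horizontal step identity for the constructed height function. -/
lemma hgt_horiz (m n : ℕ) (hm : 1 ≤ m) (μ : Crease m n → ℤ) (hmv : IsMV μ)
    (hval : MiuraLocallyValid μ) (j : ℕ) (hj : j + 1 < n) :
    ∀ i, i < m → hgt m n μ (i, j + 1) = hgt m n μ (i, j) + hstep m n μ i j := by
  rcases Nat.even_or_odd j with hje | hjo
  · -- even column: anchored at row m-1, induct downward
    have h1 : j % 2 = 0 := Nat.even_iff.mp hje
    have anchor : hgt m n μ (m - 1, j + 1) = hgt m n μ (m - 1, j) + hstep m n μ (m - 1) j := by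
      simp only [hgt, base, h1, reduceIte]
      ring
    have step : ∀ i, i + 1 < m →
        hgt m n μ (i + 1, j + 1) = hgt m n μ (i + 1, j) + hstep m n μ (i + 1) j →
        hgt m n μ (i, j + 1) = hgt m n μ (i, j) + hstep m n μ i j := by
      intro i hi hnext
      have v1 := hgt_vert m n μ i j
      have v2 := hgt_vert m n μ i (j + 1)
      have sq := square_rel m n μ hmv hval i j hi hj
      omega
    have key : ∀ d, hgt m n μ (m - 1 - d, j + 1) =
        hgt m n μ (m - 1 - d, j) + hstep m n μ (m - 1 - d) j := by
      intro d
      induction d with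
      | zero => exact anchor
      | succ d ih =>
        by_cases hd : d + 1 ≤ m - 1
        · have e : m - 1 - (d + 1) + 1 = m - 1 - d := by omega
          refine step (m - 1 - (d + 1)) (by omega) ?_
          rw [e]; exact ih
        · have e : m - 1 - (d + 1) = m - 1 - d := by omega
          rw [e]; exact ih
    intro i hi
    have := key (m - 1 - i)
    rwa [show m - 1 - (m - 1 - i) = i by omega] at this
  · -- odd column: anchored at row 0, induct upward
    have h1 : j % 2 = 1 := Nat.odd_iff.mp hjo
    have anchor : hgt m n μ (0, j + 1) = hgt m n μ (0, j) + hstep m n μ 0 j := by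
      simp only [hgt, base, colAcc, Finset.sum_range_zero]
      rw [if_neg (by omega : ¬ j % 2 = 0)]
      ring
    intro i
    induction i with
    | zero => intro _; exact anchor
    | succ i ih =>
      intro hi
      have hprev := ih (by omega)
      have v1 := hgt_vert m n μ i j
      have v2 := hgt_vert m n μ i (j + 1)
      have sq := square_rel m n μ hmv hval i j hi hj
      omega

lemma exists_height (m n : ℕ) (hm : 1 ≤ m) (μ : Crease m n → ℤ) (hmv : IsMV μ)
    (hval : MiuraLocallyValid μ) :
    ∃ h : ℕ × ℕ → ℤ, Ht m n h ∧ h (0, 0) = 0 ∧ muOf m n h = μ := by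
  refine ⟨hgt m n μ, ⟨?_, ?_⟩, ?_, ?_⟩
  · intro i j hi hj
    have v := hgt_vert m n μ i j
    rw [vstep_eq m n μ i j hi hj] at v
    have := hmv (.V i j hi hj)
    have := vsgn_eq j
    rcases this with h1 | h1 <;> rw [h1] at v <;> omega
  · intro i j hi hj
    have v := hgt_horiz m n hm μ hmv hval j hj i hi
    rw [hstep_eq m n μ i j hi hj] at v
    have := hmv (.H i j hi hj)
    omega
  · simp [hgt, base, colAcc]
  · funext e
    cases e with
    | V i j hi hj =>
      have v := hgt_vert m n μ i j
      rw [vstep_eq m n μ i j hi hj] at v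
      simp only [muOf]
      rw [v]
      have := vsgn_eq j
      rcases this with h1 | h1 <;> rw [h1] <;> ring
    | H i j hi hj =>
      have v := hgt_horiz m n hm μ hmv hval j hj i hi
      rw [hstep_eq m n μ i j hi hj] at v
      simp only [muOf]
      omega

/-! ### Parity and size bounds for height functions -/

lemma hgt_parity (m n : ℕ) (hm : 1 ≤ m) (h : ℕ × ℕ → ℤ) (hh : Ht m n h)
    (h0 : h (0, 0) = 0) :
    ∀ y, y < n → ∀ x, x < m → (h (x, y) - x - y) % 2 = 0 := by
  have row0 : ∀ y, y < n → (h (0, y) - y) % 2 = 0 := by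
    intro y
    induction y with
    | zero => intro _; omega
    | succ y ih =>
      intro hy
      have := hh.2 0 y (by omega) hy
      have := ih (by omega)
      push_cast
      push_cast at this
      omega
  intro y hy x
  induction x with
  | zero => intro _; have := row0 y hy; push_cast; omega
  | succ x ih =>
    intro hx
    have := hh.1 x y (by omega) hy
    have := ih (by omega)
    push_cast
    push_cast at this
    omega

lemma hgt_bound (m n : ℕ) (hm : 1 ≤ m) (h : ℕ × ℕ → ℤ) (hh : Ht m n h)
    (h0 : h (0, 0) = 0) :
    ∀ y, y < n → ∀ x, x < m → -((x : ℤ) + y) ≤ h (x, y) ∧ h (x, y) ≤ (x : ℤ) + y := by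
  have row0 : ∀ y, y < n → -(y : ℤ) ≤ h (0, y) ∧ h (0, y) ≤ (y : ℤ) := by
    intro y
    induction y with
    | zero => intro _; constructor <;> omega
    | succ y ih =>
      intro hy
      have := hh.2 0 y (by omega) hy
      have := ih (by omega)
      push_cast
      push_cast at this
      omega
  intro y hy x
  induction x with
  | zero => intro _; have := row0 y hy; push_cast; omega
  | succ x ih =>
    intro hx
    have := hh.1 x y (by omega) hy
    have := ih (by omega)
    push_cast
    push_cast at this
    omega

/-! ### The flip lemma -/

lemma flip_muOf (m n : ℕ) (h : ℕ × ℕ → ℤ) (hh : Ht m n h) (x y : ℕ) (e : ℤ)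
    (he : e = 1 ∨ e = -1)
    (n1 : x + 1 < m → h (x + 1, y) = h (x, y) - e)
    (n2 : ∀ i, i + 1 = x → h (i, y) = h (x, y) - e)
    (n3 : y + 1 < n → h (x, y + 1) = h (x, y) - e)
    (n4 : ∀ j, j + 1 = y → h (x, j) = h (x, y) - e) :
    Ht m n (fun p => if p = (x, y) then h (x, y) - 2 * e else h p) ∧
    faceFlip (muOf m n h) (x, y) =
      muOf m n (fun p => if p = (x, y) then h (x, y) - 2 * e else h p) := by
  set h' : ℕ × ℕ → ℤ := fun p => if p = (x, y) then h (x, y) - 2 * e else h p with hh'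
  have hval : ∀ p : ℕ × ℕ, p ≠ (x, y) → h' p = h p := by
    intro p hp; simp [hh', hp]
  have hvx : h' (x, y) = h (x, y) - 2 * e := by simp [hh']
  constructor
  · constructor
    · intro i j hi hj
      by_cases c1 : (i, j) = ((x, y) : ℕ × ℕ)
      · have hij : i = x ∧ j = y := by simpa [Prod.ext_iff] using c1
        obtain ⟨rfl, rfl⟩ := hij
        rw [hval (i + 1, j) (by simp [Prod.ext_iff]), hvx, n1 hi]
        omega
      · by_cases c2 : (i + 1, j) = ((x, y) : ℕ × ℕ)
        · have hij : i + 1 = x ∧ j = y := by simpa [Prod.ext_iff] using c2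
          obtain ⟨hix, rfl⟩ := hij
          rw [hval (i, j) c1]
          rw [show ((i + 1, j) : ℕ × ℕ) = (x, j) by rw [hix]] at *
          rw [hvx, n2 i hix]
          omega
        · rw [hval _ c1, hval _ c2]
          exact hh.1 i j hi hj
    · intro i j hi hj
      by_cases c1 : (i, j) = ((x, y) : ℕ × ℕ)
      · have hij : i = x ∧ j = y := by simpa [Prod.ext_iff] using c1
        obtain ⟨rfl, rfl⟩ := hij
        rw [hval (i, j + 1) (by simp [Prod.ext_iff]), hvx, n3 hj]
        omega
      · by_cases c2 : (i, j + 1) = ((x, y) : ℕ × ℕ)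
        · have hij : i = x ∧ j + 1 = y := by simpa [Prod.ext_iff] using c2
          obtain ⟨rfl, hjy⟩ := hij
          rw [hval (i, j) c1]
          rw [show ((i, j + 1) : ℕ × ℕ) = (i, y) by rw [hjy]] at *
          rw [hvx, n4 j hjy]
          omega
        · rw [hval _ c1, hval _ c2]
          exact hh.2 i j hi hj
  · funext ε
    cases ε with
    | V i j hi hj =>
      simp only [faceFlip]
      by_cases hb : Borders (x, y) (Crease.V i j hi hj)
      · rw [if_pos hb]
        simp only [Borders] at hb
        rcases hb with hb | hb
        · injection hb with hx1 hy1
          subst hx1; subst hy1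
          simp only [muOf]
          rw [hval (x + 1, y) (by simp [Prod.ext_iff]), hvx, n1 hi]
          ring
        · injection hb with hx1 hy1
          subst hx1; subst hy1
          simp only [muOf]
          rw [hval (i, y) (by simp [Prod.ext_iff]), hvx, n2 i rfl]
          ring
      · rw [if_neg hb]
        simp only [Borders] at hb
        push_neg at hb
        simp only [muOf]
        rw [hval (i + 1, j) (by intro hc; exact hb.2 hc.symm),
            hval (i, j) (by intro hc; exact hb.1 hc.symm)]
    | H i j hi hj =>
      simp only [faceFlip]
      by_cases hb : Borders (x, y) (Crease.H i j hi hj)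
      · rw [if_pos hb]
        simp only [Borders] at hb
        rcases hb with hb | hb
        · injection hb with hx1 hy1
          subst hx1; subst hy1
          simp only [muOf]
          rw [hval (x, y + 1) (by simp [Prod.ext_iff]), hvx, n3 hj]
          ring
        · injection hb with hx1 hy1
          subst hx1; subst hy1
          simp only [muOf]
          rw [hval (x, j) (by simp [Prod.ext_iff]), hvx, n4 j rfl]
          ring
      · rw [if_neg hb]
        simp only [Borders] at hb
        push_neg at hb
        simp only [muOf]
        rw [hval (i, j + 1) (by intro hc; exact hb.2 hc.symm),
            hval (i, j) (by intro hc; exact hb.1 hc.symm)]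

/-! ### Choosing a flip site -/

lemma exists_site (m n : ℕ) (h₁ h₂ : ℕ × ℕ → ℤ) (hh₁ : Ht m n h₁) (hh₂ : Ht m n h₂)
    (hne : ∃ p ∈ Faces m n, h₂ p < h₁ p) :
    ∃ x y, x < m ∧ y < n ∧ h₂ (x, y) < h₁ (x, y) ∧
      (x + 1 < m → h₁ (x + 1, y) = h₁ (x, y) - 1) ∧
      (∀ i, i + 1 = x → h₁ (i, y) = h₁ (x, y) - 1) ∧
      (y + 1 < n → h₁ (x, y + 1) = h₁ (x, y) - 1) ∧
      (∀ j, j + 1 = y → h₁ (x, j) = h₁ (x, y) - 1) := by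
  classical
  set s : Finset (ℕ × ℕ) := (Faces m n).filter (fun p => h₂ p < h₁ p) with hs
  have hsne : s.Nonempty := by
    obtain ⟨p, hp, hlt⟩ := hne
    exact ⟨p, Finset.mem_filter.mpr ⟨hp, hlt⟩⟩
  obtain ⟨v₀, hv₀, hmax⟩ := s.exists_max_image (fun p => h₁ p - h₂ p) hsne
  set M : ℤ := h₁ v₀ - h₂ v₀ with hM
  set s' : Finset (ℕ × ℕ) := s.filter (fun p => h₁ p - h₂ p = M) with hs'
  have hs'ne : s'.Nonempty := ⟨v₀, Finset.mem_filter.mpr ⟨hv₀, rfl⟩⟩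
  obtain ⟨v, hv, hmax'⟩ := s'.exists_max_image h₁ hs'ne
  have hvs : v ∈ s := (Finset.mem_filter.mp hv).1
  have hvM : h₁ v - h₂ v = M := (Finset.mem_filter.mp hv).2
  have hvF : v ∈ Faces m n := (Finset.mem_filter.mp hvs).1
  have hvlt : h₂ v < h₁ v := (Finset.mem_filter.mp hvs).2
  have hvm : v.1 < m ∧ v.2 < n := mem_Faces.mp hvF
  -- key neighbour property
  have key : ∀ u : ℕ × ℕ, u ∈ Faces m n →
      (h₁ u - h₁ v = 1 ∨ h₁ u - h₁ v = -1) →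
      (h₂ u - h₂ v = 1 ∨ h₂ u - h₂ v = -1) →
      h₁ u = h₁ v - 1 := by
    intro u huF hs1 hs2
    by_contra hcon
    have hu1 : h₁ u = h₁ v + 1 := by omega
    have hDu : h₁ u - h₂ u ≥ M := by omega
    have huS : u ∈ s := Finset.mem_filter.mpr ⟨huF, by omega⟩
    have hDu' : h₁ u - h₂ u ≤ M := hmax u huS
    have huS' : u ∈ s' := Finset.mem_filter.mpr ⟨huS, by omega⟩
    have := hmax' u huS'
    omega
  obtain ⟨x, y⟩ := v
  simp only at hvm ⊢
  refine ⟨x, y, hvm.1, hvm.2, hvlt, ?_, ?_, ?_, ?_⟩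
  · intro hx
    have st1 := hh₁.1 x y hx hvm.2
    have st2 := hh₂.1 x y hx hvm.2
    have := key (x + 1, y) (mem_Faces.mpr ⟨by omega, hvm.2⟩) (by omega) (by omega)
    omega
  · intro i hi
    have hx : i + 1 < m := by omega
    have st1 := hh₁.1 i y hx hvm.2
    have st2 := hh₂.1 i y hx hvm.2
    rw [show ((i + 1, y) : ℕ × ℕ) = (x, y) by rw [hi]] at st1 st2
    have := key (i, y) (mem_Faces.mpr ⟨by omega, hvm.2⟩) (by omega) (by omega)
    omega
  · intro hy
    have st1 := hh₁.2 x y hvm.1 hy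
    have st2 := hh₂.2 x y hvm.1 hy
    have := key (x, y + 1) (mem_Faces.mpr ⟨hvm.1, by omega⟩) (by omega) (by omega)
    omega
  · intro j hj
    have hy : j + 1 < n := by omega
    have st1 := hh₁.2 x j hvm.1 hy
    have st2 := hh₂.2 x j hvm.1 hy
    rw [show ((x, j + 1) : ℕ × ℕ) = (x, y) by rw [hj]] at st1 st2
    have := key (x, j) (mem_Faces.mpr ⟨hvm.1, by omega⟩) (by omega) (by omega)
    omega

lemma ht_neg (m n : ℕ) (h : ℕ × ℕ → ℤ) (hh : Ht m n h) : Ht m n (fun p => -h p) := by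
  constructor
  · intro i j hi hj; have := hh.1 i j hi hj; dsimp only; omega
  · intro i j hi hj; have := hh.2 i j hi hj; dsimp only; omega

/-! ### The main induction -/

lemma main_ind (m n : ℕ) : ∀ (N : ℕ) (h₁ h₂ : ℕ × ℕ → ℤ), Ht m n h₁ → Ht m n h₂ →
    (∀ x y, x < m → y < n → (h₁ (x, y) - h₂ (x, y)) % 2 = 0) →
    (∑ p ∈ Faces m n, |h₁ p - h₂ p|) ≤ 2 * (N : ℤ) →
    ∃ L : List (ℕ × ℕ), (∀ F ∈ L, F ∈ Faces m n) ∧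
      flipSeq (muOf m n h₁) L = muOf m n h₂ ∧ L.length ≤ N ∧
      ∀ k ≤ L.length, ∃ h, Ht m n h ∧ flipSeq (muOf m n h₁) (L.take k) = muOf m n h := by
  have zero_case : ∀ h₁ h₂ : ℕ × ℕ → ℤ, Ht m n h₁ →
      (∑ p ∈ Faces m n, |h₁ p - h₂ p|) ≤ 0 →
      ∀ N : ℕ,
      ∃ L : List (ℕ × ℕ), (∀ F ∈ L, F ∈ Faces m n) ∧
        flipSeq (muOf m n h₁) L = muOf m n h₂ ∧ L.length ≤ N ∧
        ∀ k ≤ L.length, ∃ h, Ht m n h ∧ flipSeq (muOf m n h₁) (L.take k) = muOf m n h := by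
    intro h₁ h₂ hh₁ hsum N
    have habs : ∀ p ∈ Faces m n, |h₁ p - h₂ p| = 0 := by
      intro p hp
      have hnn : ∀ p ∈ Faces m n, 0 ≤ |h₁ p - h₂ p| := fun p _ => abs_nonneg _
      have := Finset.sum_eq_zero_iff_of_nonneg hnn
      have hzz : (∑ p ∈ Faces m n, |h₁ p - h₂ p|) = 0 :=
        le_antisymm hsum (Finset.sum_nonneg hnn)
      exact (this.mp hzz) p hp
    have heq : muOf m n h₁ = muOf m n h₂ := by
      apply muOf_congr
      intro p hp
      have := habs p hp
      have := abs_eq_zero.mp this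
      omega
    refine ⟨[], by simp, heq, by simp, ?_⟩
    intro k hk
    simp only [List.length_nil, Nat.le_zero] at hk
    subst hk
    exact ⟨h₁, hh₁, rfl⟩
  intro N
  induction N with
  | zero =>
    intro h₁ h₂ hh₁ hh₂ hpar hsum
    exact zero_case h₁ h₂ hh₁ (by simpa using hsum) 0
  | succ N ih =>
    intro h₁ h₂ hh₁ hh₂ hpar hsum
    by_cases hz : (∑ p ∈ Faces m n, |h₁ p - h₂ p|) ≤ 0
    · exact zero_case h₁ h₂ hh₁ hz (N + 1)
    · push_neg at hz
      -- there is a point where they differ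
      have hex : ∃ p ∈ Faces m n, h₁ p ≠ h₂ p := by
        by_contra hcon
        push_neg at hcon
        have : (∑ p ∈ Faces m n, |h₁ p - h₂ p|) = 0 :=
          Finset.sum_eq_zero (fun p hp => by rw [hcon p hp]; simp)
        omega
      obtain ⟨p₀, hp₀, hne₀⟩ := hex
      -- find flip site and direction
      have hsite : ∃ x y, x < m ∧ y < n ∧ ∃ e : ℤ, (e = 1 ∨ e = -1) ∧
          (x + 1 < m → h₁ (x + 1, y) = h₁ (x, y) - e) ∧
          (∀ i, i + 1 = x → h₁ (i, y) = h₁ (x, y) - e) ∧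
          (y + 1 < n → h₁ (x, y + 1) = h₁ (x, y) - e) ∧
          (∀ j, j + 1 = y → h₁ (x, j) = h₁ (x, y) - e) ∧
          |h₁ (x, y) - 2 * e - h₂ (x, y)| = |h₁ (x, y) - h₂ (x, y)| - 2 := by
        rcases lt_or_gt_of_ne hne₀ with hlt | hgt
        · -- h₁ p₀ < h₂ p₀ : use negated functions
          obtain ⟨x, y, hx, hy, hd, m1, m2, m3, m4⟩ :=
            exists_site m n (fun p => -h₁ p) (fun p => -h₂ p)
              (ht_neg m n h₁ hh₁) (ht_neg m n h₂ hh₂)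
              ⟨p₀, hp₀, by omega⟩
          refine ⟨x, y, hx, hy, -1, Or.inr rfl, ?_, ?_, ?_, ?_, ?_⟩
          · intro hc; have := m1 hc; omega
          · intro i hc; have := m2 i hc; omega
          · intro hc; have := m3 hc; omega
          · intro j hc; have := m4 j hc; omega
          · have hpe := hpar x y hx hy
            have : h₁ (x, y) < h₂ (x, y) := by omega
            have h2le : h₁ (x, y) ≤ h₂ (x, y) - 2 := by omega
            rw [abs_of_nonpos (by omega), abs_of_nonpos (by omega)]
            ring
        · obtain ⟨x, y, hx, hy, hd, m1, m2, m3, m4⟩ :=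
            exists_site m n h₁ h₂ hh₁ hh₂ ⟨p₀, hp₀, hgt⟩
          refine ⟨x, y, hx, hy, 1, Or.inl rfl, m1, m2, m3, m4, ?_⟩
          have hpe := hpar x y hx hy
          have h2le : h₂ (x, y) ≤ h₁ (x, y) - 2 := by omega
          rw [abs_of_nonneg (by omega), abs_of_nonneg (by omega)]
          ring
      obtain ⟨x, y, hx, hy, e, he, n1, n2, n3, n4, hdrop⟩ := hsite
      obtain ⟨hht', hflip⟩ := flip_muOf m n h₁ hh₁ x y e he n1 n2 n3 n4
      set h₁' : ℕ × ℕ → ℤ :=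
        (fun p => if p = (x, y) then h₁ (x, y) - 2 * e else h₁ p) with hdef
      have hvmem : ((x, y) : ℕ × ℕ) ∈ Faces m n := mem_Faces.mpr ⟨hx, hy⟩
      -- new parity
      have hpar' : ∀ a b, a < m → b < n → (h₁' (a, b) - h₂ (a, b)) % 2 = 0 := by
        intro a b ha hb
        by_cases hab : ((a, b) : ℕ × ℕ) = (x, y)
        · have : a = x ∧ b = y := by simpa [Prod.ext_iff] using hab
          obtain ⟨rfl, rfl⟩ := this
          simp only [hdef, if_pos rfl]
          have := hpar a b ha hb
          omega
        · simp only [hdef, if_neg hab]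
          exact hpar a b ha hb
      -- new sum
      have hsum' : (∑ p ∈ Faces m n, |h₁' p - h₂ p|) ≤ 2 * (N : ℤ) := by
        have e1 : (∑ p ∈ Faces m n, |h₁ p - h₂ p|) =
            |h₁ (x, y) - h₂ (x, y)| + ∑ p ∈ (Faces m n).erase (x, y), |h₁ p - h₂ p| :=
          (Finset.add_sum_erase _ _ hvmem).symm
        have e2 : (∑ p ∈ Faces m n, |h₁' p - h₂ p|) =
            |h₁' (x, y) - h₂ (x, y)| + ∑ p ∈ (Faces m n).erase (x, y), |h₁' p - h₂ p| :=
          (Finset.add_sum_erase _ _ hvmem).symm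
        have e3 : (∑ p ∈ (Faces m n).erase (x, y), |h₁' p - h₂ p|) =
            ∑ p ∈ (Faces m n).erase (x, y), |h₁ p - h₂ p| := by
          apply Finset.sum_congr rfl
          intro p hp
          have hne : p ≠ (x, y) := Finset.ne_of_mem_erase hp
          simp [hdef, hne]
        have e4 : h₁' (x, y) = h₁ (x, y) - 2 * e := by simp [hdef]
        rw [e2, e3, e4]
        rw [e1] at hsum
        push_cast at hsum ⊢
        omega
      obtain ⟨L', hL'mem, hL'seq, hL'len, hL'take⟩ := ih h₁' h₂ hht' hh₂ hpar' hsum'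
      refine ⟨(x, y) :: L', ?_, ?_, ?_, ?_⟩
      · intro F hF
        rcases List.mem_cons.mp hF with rfl | hF
        · exact hvmem
        · exact hL'mem F hF
      · show flipSeq (faceFlip (muOf m n h₁) (x, y)) L' = muOf m n h₂
        rw [hflip]
        exact hL'seq
      · simpa using Nat.succ_le_succ hL'len
      · intro k hk
        cases k with
        | zero => exact ⟨h₁, hh₁, rfl⟩
        | succ k =>
          have hk' : k ≤ L'.length := by simpa using hk
          obtain ⟨h, hht, hfs⟩ := hL'take k hk'
          refine ⟨h, hht, ?_⟩
          show flipSeq (faceFlip (muOf m n h₁) (x, y)) (L'.take k) = muOf m n h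
          rw [hflip]
          exact hfs

end MiuraAux

/-- For `1 ≤ m ≤ n`, any two Miura-locally-valid MV assignments of the `m × n`
Miura-ori are connected by a sequence of at most `2 m n²` single face flips, all of
whose intermediate MV assignments are Miura-locally-valid. -/
theorem miura_flip_distance_bound (m n : ℕ) (hm : 1 ≤ m) (hmn : m ≤ n)
    (μ₁ μ₂ : Crease m n → ℤ) (hmv₁ : IsMV μ₁) (hmv₂ : IsMV μ₂)
    (hval₁ : MiuraLocallyValid μ₁) (hval₂ : MiuraLocallyValid μ₂) :
    ∃ L : List (ℕ × ℕ), (∀ F ∈ L, F ∈ Faces m n) ∧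
      flipSeq μ₁ L = μ₂ ∧
      L.length ≤ 2 * m * n ^ 2 ∧
      ∀ k ≤ L.length,
        IsMV (flipSeq μ₁ (L.take k)) ∧ MiuraLocallyValid (flipSeq μ₁ (L.take k)) := by
  classical
  obtain ⟨h₁, hh₁, h₁0, hmu₁⟩ := MiuraAux.exists_height m n hm μ₁ hmv₁ hval₁
  obtain ⟨h₂, hh₂, h₂0, hmu₂⟩ := MiuraAux.exists_height m n hm μ₂ hmv₂ hval₂
  have hpar : ∀ x y, x < m → y < n → (h₁ (x, y) - h₂ (x, y)) % 2 = 0 := by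
    intro x y hx hy
    have p1 := MiuraAux.hgt_parity m n hm h₁ hh₁ h₁0 y hy x hx
    have p2 := MiuraAux.hgt_parity m n hm h₂ hh₂ h₂0 y hy x hx
    omega
  have hsum : (∑ p ∈ Faces m n, |h₁ p - h₂ p|) ≤ 2 * ((2 * m * n ^ 2 : ℕ) : ℤ) := by
    have hbd : ∀ p ∈ Faces m n, |h₁ p - h₂ p| ≤ (4 * n : ℤ) := by
      intro p hp
      obtain ⟨hx, hy⟩ := MiuraAux.mem_Faces.mp hp
      have b1 := MiuraAux.hgt_bound m n hm h₁ hh₁ h₁0 p.2 hy p.1 hx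
      have b2 := MiuraAux.hgt_bound m n hm h₂ hh₂ h₂0 p.2 hy p.1 hx
      have hxn : (p.1 : ℤ) ≤ (n : ℤ) := by exact_mod_cast le_trans (le_of_lt hx) hmn
      have hyn : (p.2 : ℤ) ≤ (n : ℤ) := by exact_mod_cast le_of_lt hy
      rw [show ((p.1, p.2) : ℕ × ℕ) = p from rfl] at b1 b2
      rw [abs_le]
      omega
    calc (∑ p ∈ Faces m n, |h₁ p - h₂ p|) ≤ ∑ _p ∈ Faces m n, (4 * n : ℤ) :=
          Finset.sum_le_sum hbd
      _ = ((Faces m n).card : ℤ) * (4 * n : ℤ) := by rw [Finset.sum_const]; ring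
      _ ≤ 2 * ((2 * m * n ^ 2 : ℕ) : ℤ) := by
          have hcard : (Faces m n).card = m * n := by
            simp [Faces, Finset.card_product]
          rw [hcard]
          push_cast
          ring_nf
          nlinarith [Nat.cast_nonneg (α := ℤ) m, Nat.cast_nonneg (α := ℤ) n]
  obtain ⟨L, hLmem, hLseq, hLlen, hLtake⟩ :=
    MiuraAux.main_ind m n (2 * m * n ^ 2) h₁ h₂ hh₁ hh₂ hpar hsum
  rw [← hmu₁, ← hmu₂] at *
  refine ⟨L, hLmem, hLseq, hLlen, ?_⟩
  intro k hk
  obtain ⟨h, hht, hfs⟩ := hLtake k hk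
  rw [hfs]
  exact ⟨MiuraAux.isMV_muOf m n h hht, MiuraAux.miura_muOf m n h hht⟩
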